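/- Let t = t_0 < t_1 < ⋯ < t_{n+1} = T and let Z_0, …, Z_n be bounded random variables with Z_i F_{t_i}-measurable. Then, P-almost surely, E_P[ Σ_{i=0}^n Z_i 1_{t_i < τ ≤ t_{i+1}} | G_t ] = − 1_{τ > t} · E_P[ Σ_{i=0}^n Z_i (S_{t_{i+1}} − S_{t_i}) | F_t ] / S_t, where the right-hand side is taken to be 0 on {τ ≤ t} (note that P(τ > t, S_t = 0) = 0). (The recovery-payment term of the value process formula of Proposition 4.1 for stepwise F-predictable recovery processes.) -/

import Mathlib

open MeasureTheory ProbabilityTheory Set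
open Filter
open scoped NNReal Classical

noncomputable section

/-- Running infimum `X*_t = inf_{s ≤ t} X_s` of the process `X` over the time interval
`[0, t]`. -/
def runInf {Ω : Type*} (X : ℝ≥0 → Ω → ℝ) (t : ℝ≥0) (ω : Ω) : ℝ :=
  ⨅ s : Set.Icc (0 : ℝ≥0) t, X s.1 ω

/-- The σ-algebra `σ({τ ≤ s} : s ≤ t)` generated by the default observations up to time
`t`. -/
def defaultSigma {Ω : Type*} (τ : Ω → ℝ≥0) (t : ℝ≥0) : MeasurableSpace Ω :=
  MeasurableSpace.generateFrom {A | ∃ s ≤ t, A = {ω | τ ω ≤ s}}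

/-- The Azéma supermartingale `S_t = P(τ > t | F_t)` of `τ`. -/
def azema {Ω : Type*} [m0 : MeasurableSpace Ω] (P : Measure Ω) (F : Filtration ℝ≥0 m0)
    (τ : Ω → ℝ≥0) (t : ℝ≥0) : Ω → ℝ :=
  P[fun ω => if t < τ ω then (1 : ℝ) else 0|F t]

section AuxProof

variable {Ω : Type*}


lemma measurable_runInf [m0 : MeasurableSpace Ω] {X : ℝ≥0 → Ω → ℝ}
    (hX : ∀ s, Measurable (X s)) (hX_cont : ∀ ω, Continuous fun s => X s ω) (θ : ℝ≥0) :
    Measurable (runInf X θ) := by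
  obtain ⟨D, hDc, hDd⟩ := TopologicalSpace.exists_countable_dense (Set.Icc (0:ℝ≥0) θ)
  haveI : Countable D := hDc.to_subtype
  haveI hne : Nonempty (Set.Icc (0:ℝ≥0) θ) := ⟨⟨0, le_rfl, (zero_le : (0:ℝ≥0) ≤ θ)⟩⟩
  haveI : Nonempty D := hDd.nonempty.to_subtype
  have key : ∀ ω, runInf X θ ω = ⨅ d : D, X d.1.1 ω := by
    intro ω
    have hfc : Continuous (fun s : Set.Icc (0:ℝ≥0) θ => X s.1 ω) :=
      (hX_cont ω).comp continuous_subtype_val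
    have hbdd : BddBelow (Set.range fun s : Set.Icc (0:ℝ≥0) θ => X s.1 ω) :=
      (isCompact_range hfc).bddBelow
    have hbddD : BddBelow (Set.range fun d : D => X d.1.1 ω) := by
      refine hbdd.mono ?_
      rintro x ⟨d, rfl⟩; exact ⟨d.1, rfl⟩
    refine le_antisymm (le_ciInf fun d => ciInf_le hbdd d.1) (le_ciInf fun s => ?_)
    have hs : (s : Set.Icc (0:ℝ≥0) θ) ∈ closure D := hDd s
    obtain ⟨u, hu_mem, hu_lim⟩ := mem_closure_iff_seq_limit.1 hs
    exact ge_of_tendsto' ((hfc.tendsto s).comp hu_lim)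
      (fun n => ciInf_le hbddD (⟨u n, hu_mem n⟩ : D))
  have : runInf X θ = fun ω => ⨅ d : D, X d.1.1 ω := funext key
  rw [this]
  exact Measurable.iInf fun d => hX d.1.1

lemma measurable_tau [m0 : MeasurableSpace Ω] {X : ℝ≥0 → Ω → ℝ} {L : Ω → ℝ} {τ : Ω → ℝ≥0}
    (hX : ∀ s, Measurable (X s)) (hX_cont : ∀ ω, Continuous fun s => X s ω)
    (hL : Measurable L) (hτ : ∀ θ ω, θ < τ ω ↔ L ω < runInf X θ ω) : Measurable τ := by
  apply measurable_of_Ioi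
  intro θ
  have h : τ ⁻¹' Set.Ioi θ = {ω | L ω < runInf X θ ω} := by
    ext ω; simpa [Set.mem_Ioi] using hτ θ ω
  rw [h]
  exact measurableSet_lt hL (measurable_runInf hX hX_cont θ)

lemma exists_base_set {m : MeasurableSpace Ω} (τ : Ω → ℝ≥0) (t : ℝ≥0) {A : Set Ω}
    (hA : MeasurableSet[m ⊔ defaultSigma τ t] A) :
    ∃ B, MeasurableSet[m] B ∧ A ∩ {ω | t < τ ω} = B ∩ {ω | t < τ ω} := by
  let M : MeasurableSpace Ω :=
  { MeasurableSet' := fun A => ∃ B, MeasurableSet[m] B ∧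
      A ∩ {ω | t < τ ω} = B ∩ {ω | t < τ ω}
    measurableSet_empty := ⟨∅, MeasurableSet.empty, rfl⟩
    measurableSet_compl := by
      rintro A ⟨B, hB, hAB⟩
      refine ⟨Bᶜ, hB.compl, ?_⟩
      ext ω
      have h := Set.ext_iff.1 hAB ω
      simp only [Set.mem_inter_iff, Set.mem_compl_iff, Set.mem_setOf_eq] at h ⊢
      tauto
    measurableSet_iUnion := by
      intro f hf
      choose B hB hAB using hf
      refine ⟨⋃ i, B i, MeasurableSet.iUnion hB, ?_⟩
      rw [Set.iUnion_inter, Set.iUnion_inter]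
      exact Set.iUnion_congr hAB }
  have hle : m ⊔ defaultSigma τ t ≤ M := by
    have h1 : m ≤ M := by
      intro s hs
      exact ⟨s, hs, rfl⟩
    refine sup_le h1 ?_
    refine MeasurableSpace.generateFrom_le ?_
    rintro A ⟨s, hs, rfl⟩
    refine ⟨∅, @MeasurableSet.empty Ω m, ?_⟩
    rw [Set.empty_inter]
    ext ω
    simp only [Set.mem_inter_iff, Set.mem_setOf_eq, Set.mem_empty_iff_false, iff_false,
      not_and, not_lt]
    intro h1
    exact h1.trans hs
  exact hle _ hA

lemma integrable_of_bdd {mΩ : MeasurableSpace Ω} {P : Measure Ω} [IsFiniteMeasure P]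
    {f : Ω → ℝ} {C : ℝ} (hf : AEStronglyMeasurable f P) (h : ∀ᵐ ω ∂P, ‖f ω‖ ≤ C) :
    Integrable f P := ⟨hf, HasFiniteIntegral.of_bounded h⟩

lemma key_lemma [m0 : MeasurableSpace Ω] {P : Measure Ω} [IsProbabilityMeasure P]
    (F : Filtration ℝ≥0 m0) {τ : Ω → ℝ≥0} (hτm : Measurable τ) (t : ℝ≥0)
    {Y : Ω → ℝ} (hY_meas : Measurable Y) {C : ℝ} (hY_bdd : ∀ ω, |Y ω| ≤ C)
    (hY_supp : ∀ ω, ¬ t < τ ω → Y ω = 0) :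
    P[Y | F t ⊔ defaultSigma τ t] =ᵐ[P]
      fun ω => if t < τ ω then
        (P[Y|F t]) ω / (P[fun ω' => if t < τ ω' then (1:ℝ) else 0|F t]) ω else 0 := by
  classical
  rcases isEmpty_or_nonempty Ω with hΩ | hΩ
  · exact Eventually.of_forall fun ω => (IsEmpty.false ω).elim
  have hm : F t ≤ m0 := F.le t
  have hC : 0 ≤ C := le_trans (abs_nonneg _) (hY_bdd (Classical.arbitrary Ω))
  set ind : Ω → ℝ := fun ω => if t < τ ω then (1:ℝ) else 0 with hind_def
  have hSset : MeasurableSet {ω | t < τ ω} := hτm measurableSet_Ioi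
  have hind_meas : Measurable ind := Measurable.ite hSset measurable_const measurable_const
  have hind_bd : ∀ ω, ‖ind ω‖ ≤ 1 := fun ω => by
    by_cases h : t < τ ω <;> simp [ind, h]
  have hind_int : Integrable ind P :=
    integrable_of_bdd hind_meas.aestronglyMeasurable (Eventually.of_forall hind_bd)
  have hY_int : Integrable Y P :=
    integrable_of_bdd hY_meas.aestronglyMeasurable
      (Eventually.of_forall fun ω => by rw [Real.norm_eq_abs]; exact hY_bdd ω)
  set S := P[ind|F t] with hS_def
  set N := P[Y|F t] with hN_def
  have hS_nonneg : 0 ≤ᵐ[P] S :=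
    condExp_nonneg (Eventually.of_forall fun ω => by
      by_cases h : t < τ ω <;> simp [ind, h])
  have hCind_int : Integrable (fun ω => C * ind ω) P := hind_int.const_mul C
  have hsmul : P[fun ω => C * ind ω|F t] =ᵐ[P] fun ω => C * S ω := by
    exact condExp_smul (μ := P) (m := F t) C ind
  have h_up : N ≤ᵐ[P] fun ω => C * S ω := by
    have h := condExp_mono (μ := P) (m := F t) hY_int hCind_int
      (Eventually.of_forall fun ω => by
        by_cases hω : t < τ ω
        · simpa [ind, hω] using (abs_le.1 (hY_bdd ω)).2
        · simp [ind, hω, hY_supp ω hω])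
    filter_upwards [h, hsmul] with ω h1 h2
    exact h1.trans (le_of_eq h2)
  have h_lo : (fun ω => -(C * S ω)) ≤ᵐ[P] N := by
    have h := condExp_mono (μ := P) (m := F t) hCind_int.neg hY_int
      (Eventually.of_forall fun ω => by
        show -(C * ind ω) ≤ Y ω
        by_cases hω : t < τ ω
        · simpa [ind, hω] using (abs_le.1 (hY_bdd ω)).1
        · simp [ind, hω, hY_supp ω hω])
    have hneg : P[fun ω => -(C * ind ω)|F t] =ᵐ[P] fun ω => -(C * S ω) := by
      have h1 := condExp_neg (μ := P) (m := F t) (fun ω => C * ind ω)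
      filter_upwards [h1, hsmul] with ω hω1 hω2
      show (P[fun ω => -(C * ind ω)|F t]) ω = -(C * S ω)
      calc (P[fun ω => -(C * ind ω)|F t]) ω = (P[-(fun ω => C * ind ω)|F t]) ω := rfl
        _ = (-P[fun ω => C * ind ω|F t]) ω := hω1
        _ = -(C * S ω) := by simp [hω2]
    filter_upwards [h, hneg] with ω h1 h2
    exact (le_of_eq h2.symm).trans h1
  have hNS : ∀ᵐ ω ∂P, |N ω| ≤ C * S ω := by
    filter_upwards [h_up, h_lo] with ω h1 h2
    exact abs_le.2 ⟨by simpa using h2, h1⟩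
  set W : Ω → ℝ := fun ω => N ω / S ω with hW_def
  have hW_sm : StronglyMeasurable[F t] W :=
    (stronglyMeasurable_condExp.measurable.div
      stronglyMeasurable_condExp.measurable).stronglyMeasurable
  have hW_meas0 : Measurable W :=
    ((stronglyMeasurable_condExp.mono hm).measurable.div
      (stronglyMeasurable_condExp.mono hm).measurable)
  have hW_bdd : ∀ᵐ ω ∂P, ‖W ω‖ ≤ C := by
    filter_upwards [hNS, hS_nonneg] with ω h1 h2
    simp only [Pi.zero_apply] at h2
    rcases eq_or_lt_of_le h2 with h0 | h0
    · have hW0 : W ω = 0 := by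
        show N ω / S ω = 0
        rw [← h0, div_zero]
      simp [hW0, hC]
    · rw [Real.norm_eq_abs]
      show |N ω / S ω| ≤ C
      rw [abs_div, abs_of_pos h0, div_le_iff₀ h0]
      exact h1
  have hWS : ∀ᵐ ω ∂P, W ω * S ω = N ω := by
    filter_upwards [hNS, hS_nonneg] with ω h1 h2
    simp only [Pi.zero_apply] at h2
    rcases eq_or_lt_of_le h2 with h0 | h0
    · have hN0 : N ω = 0 := by
        rw [← h0, mul_zero] at h1
        exact abs_eq_zero.1 (le_antisymm h1 (abs_nonneg _))
      show N ω / S ω * S ω = N ω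
      rw [hN0, zero_div, zero_mul]
    · exact div_mul_cancel₀ _ (ne_of_gt h0)
  set g : Ω → ℝ := fun ω => W ω * ind ω with hg_def
  have hg_ind : g = Set.indicator {ω | t < τ ω} W := funext fun ω => by
    by_cases h : t < τ ω <;> simp [g, ind, h, Set.indicator_apply]
  have hY_ind : Y = Set.indicator {ω | t < τ ω} Y := funext fun ω => by
    by_cases h : t < τ ω <;> simp [Set.indicator_apply, h, hY_supp ω]
  have hg_meas0 : Measurable g := hW_meas0.mul hind_meas
  have hg_bdd : ∀ᵐ ω ∂P, ‖g ω‖ ≤ C := by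
    filter_upwards [hW_bdd] with ω h1
    calc ‖g ω‖ = ‖W ω‖ * ‖ind ω‖ := norm_mul _ _
      _ ≤ C * 1 := mul_le_mul h1 (hind_bd ω) (norm_nonneg _) hC
      _ = C := mul_one C
  have hg_int : Integrable g P :=
    integrable_of_bdd hg_meas0.aestronglyMeasurable hg_bdd
  have hD_le : defaultSigma τ t ≤ m0 := by
    refine MeasurableSpace.generateFrom_le ?_
    rintro A ⟨s, hs, rfl⟩
    exact hτm measurableSet_Iic
  have hsup_le : F t ⊔ defaultSigma τ t ≤ m0 := sup_le hm hD_le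
  have hSsetG : MeasurableSet[F t ⊔ defaultSigma τ t] {ω | t < τ ω} := by
    have h1 : MeasurableSet[defaultSigma τ t] {ω | τ ω ≤ t} :=
      MeasurableSpace.measurableSet_generateFrom ⟨t, le_rfl, rfl⟩
    have h2 := h1.compl
    have e : {ω | τ ω ≤ t}ᶜ = {ω | t < τ ω} := by ext ω; simp [not_le]
    rw [e] at h2
    exact le_sup_right (α := MeasurableSpace Ω) _ h2
  have hg_sm' : AEStronglyMeasurable[F t ⊔ defaultSigma τ t] g P := by
    rw [hg_ind]
    exact ((hW_sm.mono le_sup_left).indicator hSsetG).aestronglyMeasurable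
  have hWind_int : Integrable (fun ω => W ω * ind ω) P := hg_int
  have hpull : P[fun ω => W ω * ind ω|F t] =ᵐ[P] fun ω => W ω * S ω := by
    exact
      condExp_stronglyMeasurable_mul_of_bound hm hW_sm hind_int C hW_bdd
  have hg_eq : ∀ A : Set Ω, MeasurableSet[F t ⊔ defaultSigma τ t] A → P A < ⊤ →
      ∫ ω in A, g ω ∂P = ∫ ω in A, Y ω ∂P := by
    intro A hA _
    obtain ⟨B, hB, hAB⟩ := exists_base_set τ t hA
    have hBm0 : MeasurableSet B := hm _ hB
    have hAm0 : MeasurableSet A := hsup_le _ hA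
    have e1 : ∫ ω in A, g ω ∂P = ∫ ω in B, g ω ∂P := by
      rw [hg_ind, setIntegral_indicator hSset, setIntegral_indicator hSset, hAB]
    have e2 : ∫ ω in A, Y ω ∂P = ∫ ω in B, Y ω ∂P := by
      rw [hY_ind, setIntegral_indicator hSset, setIntegral_indicator hSset, hAB]
    rw [e1, e2]
    calc ∫ ω in B, g ω ∂P = ∫ ω in B, (P[fun ω => W ω * ind ω|F t]) ω ∂P :=
          (setIntegral_condExp hm hWind_int hB).symm
      _ = ∫ ω in B, W ω * S ω ∂P :=
          setIntegral_congr_ae hBm0 (hpull.mono fun ω hω _ => hω)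
      _ = ∫ ω in B, N ω ∂P :=
          setIntegral_congr_ae hBm0 (hWS.mono fun ω hω _ => hω)
      _ = ∫ ω in B, Y ω ∂P := setIntegral_condExp hm hY_int hB
  have hmain : g =ᵐ[P] P[Y|F t ⊔ defaultSigma τ t] :=
    ae_eq_condExp_of_forall_setIntegral_eq hsup_le hY_int
      (fun s _ _ => hg_int.integrableOn) hg_eq hg_sm'
  refine hmain.symm.trans (Eventually.of_forall fun ω => ?_)
  by_cases h : t < τ ω <;> simp [g, ind, W, h]

end AuxProof

/-- **Recovery-payment term of Proposition 4.1.** For a partition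
`t = t_0 < t_1 < ⋯ < t_{n+1} = T` and bounded `F_{t_i}`-measurable `Z_i`, `P`-a.s.,
`E_P[Σ_i Z_i 1_{t_i < τ ≤ t_{i+1}} | G_t] = − 1_{τ > t} E_P[Σ_i Z_i (S_{t_{i+1}} − S_{t_i})
| F_t] / S_t` (the right-hand side being `0` on `{τ ≤ t}`, and
`P(τ > t, S_t = 0) = 0`). -/
theorem progressive_information_recovery_term
    {Ω : Type*} [m0 : MeasurableSpace Ω] {P : Measure Ω} [IsProbabilityMeasure P]
    (F : Filtration ℝ≥0 m0)
    (X : ℝ≥0 → Ω → ℝ) (hX_adapted : Adapted F X)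
    (hX_cont : ∀ ω, Continuous fun s => X s ω)
    (L : Ω → ℝ) (hL : Measurable L)
    (hX0 : ∀ᵐ ω ∂P, L ω < X 0 ω)
    (τ : Ω → ℝ≥0)
    (hτ : ∀ (θ : ℝ≥0) (ω : Ω), θ < τ ω ↔ L ω < runInf X θ ω)
    -- the partition `t = t_0 < t_1 < ⋯ < t_{n+1} = T` and the stepwise recovery payments
    (n : ℕ) (ts : Fin (n + 2) → ℝ≥0) (hts : StrictMono ts)
    (t T : ℝ≥0) (hts0 : ts 0 = t) (htsT : ts (Fin.last (n + 1)) = T)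
    (Z : Fin (n + 1) → Ω → ℝ)
    (hZ_meas : ∀ i, Measurable[F (ts i.castSucc)] (Z i))
    (hZ_bdd : ∀ i, ∃ C, ∀ ω, |Z i ω| ≤ C) :
    P {ω | t < τ ω ∧ azema P F τ t ω = 0} = 0 ∧
    (P[fun ω => ∑ i : Fin (n + 1),
        Z i ω * (if ts i.castSucc < τ ω ∧ τ ω ≤ ts i.succ then 1 else 0)|
          F t ⊔ defaultSigma τ t]) =ᵐ[P]
      fun ω => if t < τ ω then
        -((P[fun ω' => ∑ i : Fin (n + 1),
            Z i ω' * (azema P F τ (ts i.succ) ω' - azema P F τ (ts i.castSucc) ω')|F t]) ω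
          / azema P F τ t ω)
      else 0 := by
  classical
  have hτm : Measurable τ :=
    measurable_tau (fun s => (hX_adapted s).mono (F.le s) le_rfl) hX_cont hL hτ
  -- the indicator process and its basic properties
  set indu : ℝ≥0 → Ω → ℝ := fun u ω => if u < τ ω then (1:ℝ) else 0 with hindu_def
  have hSset : ∀ u : ℝ≥0, MeasurableSet {ω | u < τ ω} := fun u => hτm measurableSet_Ioi
  have hindu_meas : ∀ u, Measurable (indu u) := fun u =>
    Measurable.ite (hSset u) measurable_const measurable_const
  have hindu_bd : ∀ u ω, ‖indu u ω‖ ≤ 1 := fun u ω => by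
    by_cases h : u < τ ω <;> simp [indu, h]
  have hindu_int : ∀ u, Integrable (indu u) P := fun u =>
    integrable_of_bdd ((hindu_meas u).aestronglyMeasurable)
      (Eventually.of_forall (hindu_bd u))
  have hazema : ∀ u, azema P F τ u = P[indu u|F u] := fun u => rfl
  -- Part 1 : P(τ > t, S_t = 0) = 0
  constructor
  · set S := azema P F τ t with hS_def
    have hSm : StronglyMeasurable[F t] S := stronglyMeasurable_condExp
    have hZ0m : MeasurableSet[F t] {ω | S ω = 0} :=
      hSm.measurable (MeasurableSet.singleton 0)
    have hZ0m0 : MeasurableSet {ω | S ω = 0} := F.le t _ hZ0m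
    have h1 : ∫ ω in {ω | S ω = 0}, indu t ω ∂P = ∫ ω in {ω | S ω = 0}, S ω ∂P :=
      (setIntegral_condExp (F.le t) (hindu_int t) hZ0m).symm
    have h2 : ∫ ω in {ω | S ω = 0}, S ω ∂P = 0 := by
      rw [setIntegral_congr_fun hZ0m0 (fun ω hω => hω)]
      simp
    have h3 : ∫ ω in {ω | S ω = 0}, indu t ω ∂P
        = (P ({ω | S ω = 0} ∩ {ω | t < τ ω})).toReal := by
      have e : indu t = Set.indicator {ω | t < τ ω} (fun _ => (1:ℝ)) := funext fun ω => by
        by_cases h : t < τ ω <;> simp [indu, h, Set.indicator_apply]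
      rw [e, setIntegral_indicator (hSset t), setIntegral_const, smul_eq_mul, mul_one, measureReal_def]
    have h4 : (P ({ω | S ω = 0} ∩ {ω | t < τ ω})).toReal = 0 := by
      rw [← h3, h1, h2]
    have h5 : P ({ω | S ω = 0} ∩ {ω | t < τ ω}) = 0 := by
      rcases (ENNReal.toReal_eq_zero_iff _).1 h4 with h | h
      · exact h
      · exact absurd h (measure_ne_top P _)
    have e2 : {ω | t < τ ω ∧ azema P F τ t ω = 0}
        = {ω | S ω = 0} ∩ {ω | t < τ ω} := by
      ext ω; simp only [Set.mem_setOf_eq, Set.mem_inter_iff, ← hS_def]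
      tauto
    rw [e2]; exact h5
  -- Part 2
  · choose Cc hCc using hZ_bdd
    set Y : Ω → ℝ := fun ω => ∑ i : Fin (n + 1),
        Z i ω * (if ts i.castSucc < τ ω ∧ τ ω ≤ ts i.succ then 1 else 0) with hY_def
    have hZm0 : ∀ i, Measurable (Z i) := fun i =>
      ((hZ_meas i).mono (F.le _) le_rfl)
    have hY_meas : Measurable Y := by
      apply Finset.measurable_sum
      intro i _
      exact (hZm0 i).mul
        (Measurable.ite ((hSset _).inter ((hτm measurableSet_Iic))) measurable_const
          measurable_const)
    have ht_le : ∀ i : Fin (n + 1), t ≤ ts i.castSucc := fun i => by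
      rw [← hts0]; exact hts.monotone (Fin.zero_le _)
    have hterm_bd : ∀ i (ω : Ω),
        |Z i ω * (if ts i.castSucc < τ ω ∧ τ ω ≤ ts i.succ then (1:ℝ) else 0)| ≤ |Cc i| := by
      intro i ω
      rw [abs_mul]
      have h1 : |Z i ω| ≤ |Cc i| := (hCc i ω).trans (le_abs_self _)
      have h2 : |(if ts i.castSucc < τ ω ∧ τ ω ≤ ts i.succ then (1:ℝ) else 0)| ≤ 1 := by
        by_cases h : ts i.castSucc < τ ω ∧ τ ω ≤ ts i.succ <;> simp [h]
      calc |Z i ω| * _ ≤ |Cc i| * 1 :=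
        mul_le_mul h1 h2 (abs_nonneg _) (abs_nonneg _)
        _ = |Cc i| := mul_one _
    have hY_bdd : ∀ ω, |Y ω| ≤ ∑ i : Fin (n + 1), |Cc i| := fun ω =>
      (Finset.abs_sum_le_sum_abs _ _).trans
        (Finset.sum_le_sum fun i _ => hterm_bd i ω)
    have hY_supp : ∀ ω, ¬ t < τ ω → Y ω = 0 := by
      intro ω hω
      refine Finset.sum_eq_zero fun i _ => ?_
      have : ¬ (ts i.castSucc < τ ω ∧ τ ω ≤ ts i.succ) := by
        rintro ⟨h1, -⟩
        exact hω (lt_of_le_of_lt (ht_le i) h1)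
      simp [this]
    have hkey := key_lemma (P := P) F hτm t hY_meas hY_bdd hY_supp
    -- the drift identity
    have hZbd' : ∀ i (u : ℝ≥0), ∀ᵐ ω ∂P, ‖Z i ω‖ ≤ Cc i := fun i u =>
      Eventually.of_forall fun ω => by rw [Real.norm_eq_abs]; exact hCc i ω
    have hZint : ∀ i u, Integrable (fun ω => Z i ω * indu u ω) P := fun i u =>
      integrable_of_bdd (((hZm0 i).mul (hindu_meas u)).aestronglyMeasurable)
        (Eventually.of_forall fun ω => by
          rw [Real.norm_eq_abs, abs_mul]
          calc |Z i ω| * |indu u ω| ≤ |Cc i| * 1 := by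
                refine mul_le_mul ((hCc i ω).trans (le_abs_self _)) ?_ (abs_nonneg _)
                  (abs_nonneg _)
                simpa [Real.norm_eq_abs] using hindu_bd u ω
            _ = |Cc i| := mul_one _)
    have hZazint : ∀ i u, Integrable (fun ω => Z i ω * azema P F τ u ω) P := fun i u => by
      have := (integrable_condExp (μ := P) (f := indu u) (m := F u)).bdd_mul
        ((hZm0 i).aestronglyMeasurable) (hZbd' i u)
      exact this
    -- conditional expectations agree
    have hcond : ∀ (i : Fin (n + 1)) (u : ℝ≥0), ts i.castSucc ≤ u →
        P[fun ω => Z i ω * indu u ω|F t] =ᵐ[P]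
        P[fun ω => Z i ω * azema P F τ u ω|F t] := by
      intro i u hu
      have htu : t ≤ u := (ht_le i).trans hu
      have hZsm : StronglyMeasurable[F u] (Z i) :=
        (((hZ_meas i).mono (F.mono hu) le_rfl)).stronglyMeasurable
      have hpull : P[fun ω => Z i ω * indu u ω|F u] =ᵐ[P]
          fun ω => Z i ω * azema P F τ u ω := by
        exact
          condExp_stronglyMeasurable_mul_of_bound (F.le u) hZsm (hindu_int u) (Cc i)
            (hZbd' i u)
      have htower := condExp_condExp_of_le (μ := P) (f := fun ω => Z i ω * indu u ω)
        (F.mono htu) (F.le u)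
      exact htower.symm.trans (condExp_congr_ae hpull)
    -- split Y
    have hsplit : ∀ (i : Fin (n + 1)) (ω : Ω),
        Z i ω * (if ts i.castSucc < τ ω ∧ τ ω ≤ ts i.succ then (1:ℝ) else 0)
        = Z i ω * indu (ts i.castSucc) ω - Z i ω * indu (ts i.succ) ω := by
      intro i ω
      rw [← mul_sub]
      congr 1
      have hab : ts i.castSucc < ts i.succ := hts (Fin.castSucc_lt_succ (i := i))
      by_cases h1 : ts i.castSucc < τ ω
      · by_cases h2 : ts i.succ < τ ω
        · have : ¬ τ ω ≤ ts i.succ := not_le.2 h2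
          simp [indu, h1, h2, this]
        · have : τ ω ≤ ts i.succ := not_lt.1 h2
          simp [indu, h1, h2, this]
      · have h2 : ¬ ts i.succ < τ ω := fun h => h1 (hab.trans h)
        simp [indu, h1, h2]
    -- condexp of Y as a sum
    have hfun1 : Y = ∑ i : Fin (n + 1),
        (fun ω => Z i ω * indu (ts i.castSucc) ω - Z i ω * indu (ts i.succ) ω) := by
      funext ω
      rw [Finset.sum_apply]
      exact Finset.sum_congr rfl fun i _ => hsplit i ω
    have hsub_int : ∀ i : Fin (n + 1), Integrable
        (fun ω => Z i ω * indu (ts i.castSucc) ω - Z i ω * indu (ts i.succ) ω) P :=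
      fun i => (hZint i _).sub (hZint i _)
    have hsum1 : P[Y|F t] =ᵐ[P] ∑ i : Fin (n + 1),
        P[fun ω => Z i ω * indu (ts i.castSucc) ω - Z i ω * indu (ts i.succ) ω|F t] := by
      rw [hfun1]
      exact condExp_finsetSum (fun i _ => hsub_int i) (F t)
    have hsum2 : ∀ i : Fin (n + 1),
        P[fun ω => Z i ω * indu (ts i.castSucc) ω - Z i ω * indu (ts i.succ) ω|F t] =ᵐ[P]
        fun ω => (P[fun ω' => Z i ω' * azema P F τ (ts i.castSucc) ω'|F t]) ω
          - (P[fun ω' => Z i ω' * azema P F τ (ts i.succ) ω'|F t]) ω := by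
      intro i
      have h1 := condExp_sub (μ := P) (m := F t) (hZint i (ts i.castSucc))
        (hZint i (ts i.succ))
      have h2 := hcond i (ts i.castSucc) le_rfl
      have h3 := hcond i (ts i.succ) (hts (Fin.castSucc_lt_succ (i := i))).le
      filter_upwards [h1, h2, h3] with ω hω1 hω2 hω3
      have : (P[fun ω => Z i ω * indu (ts i.castSucc) ω - Z i ω * indu (ts i.succ) ω|F t]) ω
          = (P[fun ω => Z i ω * indu (ts i.castSucc) ω|F t]) ω
            - (P[fun ω => Z i ω * indu (ts i.succ) ω|F t]) ω := hω1
      rw [this, hω2, hω3]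
    -- condexp of the azema increments sum
    set A : Ω → ℝ := fun ω => ∑ i : Fin (n + 1),
        Z i ω * (azema P F τ (ts i.succ) ω - azema P F τ (ts i.castSucc) ω) with hA_def
    have hfun2 : A = ∑ i : Fin (n + 1),
        (fun ω => Z i ω * azema P F τ (ts i.succ) ω
          - Z i ω * azema P F τ (ts i.castSucc) ω) := by
      funext ω
      rw [Finset.sum_apply]
      exact Finset.sum_congr rfl fun i _ => by rw [mul_sub]
    have hsum3 : P[A|F t] =ᵐ[P] ∑ i : Fin (n + 1),
        P[fun ω => Z i ω * azema P F τ (ts i.succ) ω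
          - Z i ω * azema P F τ (ts i.castSucc) ω|F t] := by
      rw [hfun2]
      exact condExp_finsetSum (fun i _ => (hZazint i _).sub (hZazint i _)) (F t)
    have hsum4 : ∀ i : Fin (n + 1),
        P[fun ω => Z i ω * azema P F τ (ts i.succ) ω
          - Z i ω * azema P F τ (ts i.castSucc) ω|F t] =ᵐ[P]
        fun ω => (P[fun ω' => Z i ω' * azema P F τ (ts i.succ) ω'|F t]) ω
          - (P[fun ω' => Z i ω' * azema P F τ (ts i.castSucc) ω'|F t]) ω :=
      fun i => condExp_sub (μ := P) (m := F t) (hZazint i _) (hZazint i _)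
    -- combine : P[Y|F t] = - P[A|F t] a.e.
    have hNA : ∀ᵐ ω ∂P, (P[Y|F t]) ω = -((P[A|F t]) ω) := by
      have hall2 := ae_all_iff.2 hsum2
      have hall4 := ae_all_iff.2 hsum4
      filter_upwards [hsum1, hsum3, hall2, hall4] with ω h1 h3 h2 h4
      have e1 : (P[Y|F t]) ω = ∑ i : Fin (n + 1),
          ((P[fun ω' => Z i ω' * azema P F τ (ts i.castSucc) ω'|F t]) ω
            - (P[fun ω' => Z i ω' * azema P F τ (ts i.succ) ω'|F t]) ω) := by
        rw [h1, Finset.sum_apply]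
        exact Finset.sum_congr rfl fun i _ => h2 i
      have e2 : (P[A|F t]) ω = ∑ i : Fin (n + 1),
          ((P[fun ω' => Z i ω' * azema P F τ (ts i.succ) ω'|F t]) ω
            - (P[fun ω' => Z i ω' * azema P F τ (ts i.castSucc) ω'|F t]) ω) := by
        rw [h3, Finset.sum_apply]
        exact Finset.sum_congr rfl fun i _ => h4 i
      rw [e1, e2, ← Finset.sum_neg_distrib]
      exact Finset.sum_congr rfl fun i _ => by ring
    -- finish
    refine hkey.trans ?_
    filter_upwards [hNA] with ω hω
    by_cases h : t < τ ω
    · rw [if_pos h, if_pos h, hω, neg_div]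
      rfl
    · rw [if_neg h, if_neg h]
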